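/- Let t ≥ 3 be odd and j₀ ≥ 1 an integer. For every ξ₀ ∈ (1/t)ℤ² \ ℤ², there exists k₀ ∈ ℤ² such that ξ₀ + k₀ ∈ (1/t)·2^{j₀−1}·(ℤ² \ 2ℤ²). -/
import Mathlib


/-- for odd `t ≥ 3`, `j₀ ≥ 1`, and `ξ₀ ∈ (1/t)ℤ² \ ℤ²`, there exists
`k₀ ∈ ℤ²` with `ξ₀ + k₀ ∈ (1/t)·2^{j₀−1}·(ℤ² \ 2ℤ²)`. -/
theorem stmt_9 (t : ℤ) (ht : 3 ≤ t) (hodd : Odd t) (j₀ : ℕ) (hj₀ : 1 ≤ j₀)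
    (ξ : ℝ × ℝ)
    (hξ1 : ∃ v : ℤ × ℤ, ξ = ((v.1 : ℝ) / (t : ℝ), (v.2 : ℝ) / (t : ℝ)))
    (hξ2 : ¬ ∃ k : ℤ × ℤ, ξ = ((k.1 : ℝ), (k.2 : ℝ))) :
    ∃ k₀ : ℤ × ℤ, ∃ w : ℤ × ℤ, (Odd w.1 ∨ Odd w.2) ∧
      ξ + ((k₀.1 : ℝ), (k₀.2 : ℝ))
        = (((2 ^ (j₀ - 1) * w.1 : ℤ) : ℝ) / (t : ℝ),
           ((2 ^ (j₀ - 1) * w.2 : ℤ) : ℝ) / (t : ℝ)) := by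
  obtain ⟨v, hv⟩ := hξ1
  set N := j₀ - 1 with hN
  -- t is coprime to 2, hence to 2^(N+1)
  obtain ⟨m, hm⟩ := hodd
  have hcop : IsCoprime t (2 : ℤ) := ⟨1, -m, by rw [hm]; ring⟩
  obtain ⟨u, c, huc⟩ := hcop.pow_right (n := N + 1)
  -- u * t + c * 2^(N+1) = 1
  refine ⟨(u * (2 ^ N - v.1), -(u * v.2)),
    (1 - 2 * c * (2 ^ N - v.1), 2 * c * v.2), Or.inl ⟨-(c * (2 ^ N - v.1)), by ring⟩, ?_⟩
  have ht0 : (t : ℝ) ≠ 0 := by positivity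
  have key : t * u = 1 - c * (2 ^ N * 2) := by
    have := huc
    rw [pow_succ] at this
    linarith
  have h1 : (2 : ℤ) ^ N * (1 - 2 * c * (2 ^ N - v.1)) = v.1 + t * (u * (2 ^ N - v.1)) := by
    linear_combination (v.1 - 2 ^ N) * key
  have h2 : (2 : ℤ) ^ N * (2 * c * v.2) = v.2 + t * (-(u * v.2)) := by
    linear_combination v.2 * key
  have hr1 : ((2 : ℝ) ^ N * (1 - 2 * (c:ℝ) * (2 ^ N - (v.1:ℝ))))
      = (v.1:ℝ) + (t:ℝ) * ((u:ℝ) * (2 ^ N - (v.1:ℝ))) := by exact_mod_cast h1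
  have hr2 : ((2 : ℝ) ^ N * (2 * (c:ℝ) * (v.2:ℝ)))
      = (v.2:ℝ) + (t:ℝ) * (-((u:ℝ) * (v.2:ℝ))) := by exact_mod_cast h2
  rw [hv, Prod.mk_add_mk, Prod.mk.injEq]
  constructor
  · field_simp
    push_cast
    linear_combination -hr1
  · field_simp
    push_cast
    linear_combination -hr2
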